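/- arXiv:1909.08589 — 8 statements merged into one kernel-verified Lean document; each statement's English description precedes it below -/
import Mathlib

section
/- The limit as q tends to 1 from below of the sum over k ≥ 1 of (−1)^k · q^{k²} equals −1/2. -/
open Real Filter Set

noncomputable def Ssum (b : ℝ) : ℝ := ∑' k : ℕ, Real.exp (-π * b * ((k : ℝ) + 1) ^ 2)
noncomputable def Th (a : ℝ) : ℝ := ∑' n : ℤ, Real.exp (-π * a * (n : ℝ) ^ 2)

lemma summable_S {b : ℝ} (hb : 0 < b) :
    Summable (fun k : ℕ => Real.exp (-π * b * ((k : ℝ) + 1) ^ 2)) := by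
  have hr0 : (0:ℝ) ≤ Real.exp (-π * b) := (Real.exp_pos _).le
  have hr1 : Real.exp (-π * b) < 1 := by
    rw [Real.exp_lt_one_iff]
    nlinarith [Real.pi_pos]
  refine Summable.of_nonneg_of_le (fun k => (Real.exp_pos _).le) (fun k => ?_)
    (((summable_geometric_of_lt_one hr0 hr1).mul_left (Real.exp (-π * b))).congr
      (fun k => (pow_succ' _ _).symm))
  rw [← Real.exp_nat_mul]
  apply Real.exp_le_exp.mpr
  have : ((k:ℝ)+1) ≤ ((k:ℝ)+1)^2 := by nlinarith [Nat.cast_nonneg (α := ℝ) k]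
  have hc : ((k+1 : ℕ) : ℝ) = (k:ℝ)+1 := by push_cast; ring
  rw [hc]
  nlinarith [mul_pos Real.pi_pos hb, this]

lemma summable_N {a : ℝ} (ha : 0 < a) :
    Summable (fun n : ℕ => Real.exp (-π * a * (n : ℝ) ^ 2)) := by
  rw [← summable_nat_add_iff 1]
  exact (summable_S ha).congr (fun k => by push_cast; ring_nf)

lemma summable_Z {a : ℝ} (ha : 0 < a) :
    Summable (fun n : ℤ => Real.exp (-π * a * (n : ℝ) ^ 2)) := by
  refine Summable.of_nat_of_neg_add_one (f := fun n : ℤ => Real.exp (-π * a * (n : ℝ) ^ 2))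
    ((summable_N ha).congr (fun n => by push_cast; ring_nf))
    ((summable_S ha).congr (fun k => by push_cast; ring_nf))

lemma theta_split {a : ℝ} (ha : 0 < a) : Th a = 1 + 2 * Ssum a := by
  have hpos : Summable (fun n : ℕ => Real.exp (-π * a * (((n : ℤ)) : ℝ) ^ 2)) :=
    (summable_N ha).congr (fun n => by push_cast; ring_nf)
  have hneg : Summable (fun n : ℕ => Real.exp (-π * a * (((-(n + 1) : ℤ)) : ℝ) ^ 2)) :=
    (summable_S ha).congr (fun k => by push_cast; ring_nf)
  rw [Th, tsum_of_nat_of_neg_add_one (f := fun n : ℤ => Real.exp (-π * a * (n : ℝ) ^ 2)) hpos hneg]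
  have h1 : ∑' n : ℕ, Real.exp (-π * a * (((n : ℤ)) : ℝ) ^ 2)
      = Real.exp 0 + ∑' k : ℕ, Real.exp (-π * a * ((k : ℝ) + 1) ^ 2) := by
    rw [Summable.tsum_eq_zero_add hpos]
    congr 1
    · push_cast; ring_nf
    · apply tsum_congr; intro k; push_cast; ring_nf
  have h2 : ∑' n : ℕ, Real.exp (-π * a * (((-(n + 1) : ℤ)) : ℝ) ^ 2)
      = ∑' k : ℕ, Real.exp (-π * a * ((k : ℝ) + 1) ^ 2) := by
    apply tsum_congr; intro n; push_cast; ring_nf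
  rw [h1, h2, Ssum, Real.exp_zero]; ring

lemma theta_poisson {a : ℝ} (ha : 0 < a) : Th a = (1 / a ^ ((1:ℝ)/2)) * Th a⁻¹ := by
  rw [Th, Real.tsum_exp_neg_mul_int_sq ha, Th]
  congr 1

lemma four_rpow_half : (4:ℝ) ^ ((1:ℝ)/2) = 2 := by
  rw [show (4:ℝ) = 2 ^ (2:ℕ) by norm_num, ← Real.rpow_natCast 2 2,
    ← Real.rpow_mul (by norm_num)]
  norm_num

lemma E_eq {a : ℝ} (ha : 0 < a) :
    2 * Th (4*a) - Th a = (1 / a ^ ((1:ℝ)/2)) * (2 * (Ssum (4*a)⁻¹ - Ssum a⁻¹)) := by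
  have h4 : (0:ℝ) < 4*a := by linarith
  have hs : (0:ℝ) < a ^ ((1:ℝ)/2) := Real.rpow_pos_of_pos ha _
  have h4s : ((4*a) : ℝ) ^ ((1:ℝ)/2) = 2 * a ^ ((1:ℝ)/2) := by
    rw [Real.mul_rpow (by norm_num) ha.le, four_rpow_half]
  rw [theta_poisson h4, theta_poisson ha, theta_split (inv_pos.mpr h4),
    theta_split (inv_pos.mpr ha), h4s]
  field_simp
  ring

lemma key {a : ℝ} (ha : 0 < a) :
    (∑' k : ℕ, (-1:ℝ)^(k+1) * (Real.exp (-π * a))^((k+1)^2))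
      = -1/2 + (2 * Th (4*a) - Th a)/2 := by
  have h4 : (0:ℝ) < 4*a := by linarith
  have hinj : Function.Injective (fun j : ℕ => 2*j+1) := fun x y h => by
    simp only at h; omega
  have hS4 : HasSum (fun j : ℕ =>
      ((-1:ℝ)^(2*j+1+1)+1) * Real.exp (-π * a * (((2*j+1:ℕ):ℝ)+1)^2)) (2 * Ssum (4*a)) := by
    refine ((summable_S h4).hasSum.mul_left 2).congr_fun fun j => ?_
    have hc : ((-1:ℝ))^(2*j+1+1) = 1 := Even.neg_one_pow ⟨j+1, by ring⟩
    rw [hc]; push_cast; ring_nf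
  have hg : HasSum (fun k : ℕ =>
      ((-1:ℝ)^(k+1)+1) * Real.exp (-π * a * ((k:ℝ)+1)^2)) (2 * Ssum (4*a)) := by
    refine (Function.Injective.hasSum_iff (g := fun j : ℕ => 2*j+1)
      (f := fun k : ℕ => ((-1:ℝ)^(k+1)+1) * Real.exp (-π * a * ((k:ℝ)+1)^2)) hinj ?_).mp hS4
    intro k hk
    have hke : Even k := by
      rcases Nat.even_or_odd k with h | h
      · exact h
      · obtain ⟨m, hm⟩ := h
        exact absurd ⟨m, by simp only; omega⟩ hk
    have h1 : ((-1:ℝ))^(k+1) = -1 := Odd.neg_one_pow hke.add_one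
    simp only [h1]; ring
  have hAlt : HasSum (fun k : ℕ =>
      (-1:ℝ)^(k+1) * Real.exp (-π * a * ((k:ℝ)+1)^2)) (2 * Ssum (4*a) - Ssum a) := by
    refine (hg.sub (summable_S ha).hasSum).congr_fun fun k => ?_
    ring
  calc (∑' k : ℕ, (-1:ℝ)^(k+1) * (Real.exp (-π * a))^((k+1)^2))
      = ∑' k : ℕ, (-1:ℝ)^(k+1) * Real.exp (-π * a * ((k:ℝ)+1)^2) := by
        apply tsum_congr; intro k
        rw [← Real.exp_nat_mul]; push_cast; ring_nf
    _ = 2 * Ssum (4*a) - Ssum a := hAlt.tsum_eq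
    _ = -1/2 + (2 * Th (4*a) - Th a)/2 := by
        rw [theta_split h4, theta_split ha]; ring

lemma Ssum_le {b : ℝ} (hb : 0 < b) :
    Ssum b ≤ Real.exp (-π * b) * (1 - Real.exp (-π * b))⁻¹ := by
  have hr0 : (0:ℝ) ≤ Real.exp (-π * b) := (Real.exp_pos _).le
  have hr1 : Real.exp (-π * b) < 1 := by
    rw [Real.exp_lt_one_iff]; nlinarith [Real.pi_pos]
  have hgeo : Summable (fun k : ℕ => Real.exp (-π * b) ^ (k+1)) :=
    ((summable_geometric_of_lt_one hr0 hr1).mul_left (Real.exp (-π * b))).congr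
      (fun k => (pow_succ' _ _).symm)
  have h1 : Ssum b ≤ ∑' k : ℕ, Real.exp (-π * b) ^ (k+1) := by
    refine Summable.tsum_le_tsum (fun k => ?_) (summable_S hb) hgeo
    rw [← Real.exp_nat_mul]
    apply Real.exp_le_exp.mpr
    have hk : ((k:ℝ)+1) ≤ ((k:ℝ)+1)^2 := by nlinarith [Nat.cast_nonneg (α := ℝ) k]
    have hc : ((k+1 : ℕ) : ℝ) = (k:ℝ)+1 := by push_cast; ring
    rw [hc]
    nlinarith [mul_pos Real.pi_pos hb, hk]
  have h2 : ∑' k : ℕ, Real.exp (-π * b) ^ (k+1)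
      = Real.exp (-π * b) * (1 - Real.exp (-π * b))⁻¹ := by
    calc ∑' k : ℕ, Real.exp (-π * b) ^ (k+1)
        = ∑' k : ℕ, Real.exp (-π * b) * Real.exp (-π * b) ^ k := by
          apply tsum_congr; intro k; rw [pow_succ']
      _ = Real.exp (-π * b) * ∑' k : ℕ, Real.exp (-π * b) ^ k := tsum_mul_left
      _ = Real.exp (-π * b) * (1 - Real.exp (-π * b))⁻¹ := by
          rw [tsum_geometric_of_lt_one hr0 hr1]
  linarith [h1, h2.le, h2.ge]

lemma Ssum_diff_nonneg {a : ℝ} (ha : 0 < a) : 0 ≤ Ssum (4*a)⁻¹ - Ssum a⁻¹ := by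
  refine sub_nonneg.mpr (Summable.tsum_le_tsum (fun k => ?_)
    (summable_S (inv_pos.mpr ha)) (summable_S (inv_pos.mpr (by linarith : (0:ℝ) < 4*a))))
  apply Real.exp_le_exp.mpr
  have h1 : (4*a)⁻¹ ≤ a⁻¹ := by
    rw [mul_inv]
    nlinarith [inv_pos.mpr ha]
  have h2 : (0:ℝ) ≤ π * ((k:ℝ)+1)^2 := by positivity
  nlinarith [mul_nonneg h2 (sub_nonneg.mpr h1)]

lemma E_bound {a : ℝ} (ha : 0 < a) (ha1 : a ≤ 1) :
    0 ≤ 2 * Th (4*a) - Th a ∧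
      2 * Th (4*a) - Th a ≤ (1 / a ^ ((1:ℝ)/2)) * (4 * Real.exp (-π * (4*a)⁻¹)) := by
  have h4 : (0:ℝ) < 4*a := by linarith
  have hs : (0:ℝ) < a ^ ((1:ℝ)/2) := Real.rpow_pos_of_pos ha _
  have hinv4 : (0:ℝ) < (4*a)⁻¹ := inv_pos.mpr h4
  set r := Real.exp (-π * (4*a)⁻¹) with hr
  have hr0 : (0:ℝ) < r := Real.exp_pos _
  have hrhalf : r ≤ 1/2 := by
    have hq : (1:ℝ)/4 ≤ (4*a)⁻¹ := by
      rw [le_inv_comm₀ (by norm_num) h4]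
      · linarith
    have hlog : Real.log 2 ≤ π * (4*a)⁻¹ := by
      nlinarith [Real.log_two_lt_d9, Real.pi_gt_d6, hq, Real.pi_pos]
    have : r ≤ Real.exp (-Real.log 2) := by
      apply Real.exp_le_exp.mpr; linarith
    rwa [Real.exp_neg, Real.exp_log (by norm_num : (0:ℝ) < 2),
      show ((2:ℝ))⁻¹ = 1/2 by norm_num] at this
  have hSle : Ssum (4*a)⁻¹ - Ssum a⁻¹ ≤ 2 * r := by
    have h1 : Ssum (4*a)⁻¹ ≤ r * (1 - r)⁻¹ := Ssum_le hinv4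
    have h2 : (1 - r)⁻¹ ≤ 2 := by
      rw [inv_le_comm₀ (by linarith) (by norm_num)]
      linarith
    have h3 : r * (1 - r)⁻¹ ≤ r * 2 := by
      apply mul_le_mul_of_nonneg_left h2 hr0.le
    have h4' : 0 ≤ Ssum a⁻¹ := by
      rw [Ssum]
      exact tsum_nonneg (fun k => (Real.exp_pos _).le)
    linarith
  constructor
  · rw [E_eq ha]
    have := Ssum_diff_nonneg ha
    positivity
  · rw [E_eq ha]
    have hc : (0:ℝ) ≤ 1 / a ^ ((1:ℝ)/2) := by positivity
    calc (1 / a ^ ((1:ℝ)/2)) * (2 * (Ssum (4*a)⁻¹ - Ssum a⁻¹))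
        ≤ (1 / a ^ ((1:ℝ)/2)) * (2 * (2 * r)) := by
          apply mul_le_mul_of_nonneg_left _ hc
          linarith
      _ = (1 / a ^ ((1:ℝ)/2)) * (4 * r) := by ring

lemma B_tendsto : Filter.Tendsto (fun a : ℝ => (1 / a ^ ((1:ℝ)/2)) * (4 * Real.exp (-π * (4*a)⁻¹)))
    (nhdsWithin 0 (Set.Ioi 0)) (nhds 0) := by
  have h1 := (tendsto_rpow_mul_exp_neg_mul_atTop_nhds_zero ((1:ℝ)/2) (π/4)
    (by positivity)).comp tendsto_inv_nhdsGT_zero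
  have h2 := h1.const_mul (4:ℝ)
  rw [mul_zero] at h2
  refine h2.congr' ?_
  filter_upwards [self_mem_nhdsWithin] with a (ha : (0:ℝ) < a)
  have e1 : -π * (4*a)⁻¹ = -(π/4) * a⁻¹ := by rw [mul_inv]; ring
  show 4 * ((a⁻¹) ^ ((1:ℝ)/2) * Real.exp (-(π/4) * a⁻¹)) = _
  rw [e1, Real.inv_rpow ha.le, ← one_div]
  ring

theorem theta_series_limit :
    Filter.Tendsto (fun q : ℝ => ∑' k : ℕ, (-1 : ℝ) ^ (k + 1) * q ^ ((k + 1) ^ 2))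
      (nhdsWithin 1 (Set.Iio 1)) (nhds (-1 / 2)) := by
  have hmem : ∀ᶠ q in nhdsWithin (1:ℝ) (Set.Iio 1), q ∈ Set.Ioo (0:ℝ) 1 := by
    filter_upwards [self_mem_nhdsWithin,
      nhdsWithin_le_nhds (eventually_gt_nhds (by norm_num : (0:ℝ) < 1))] with q h1 h2
    exact ⟨h2, h1⟩
  set aq : ℝ → ℝ := fun q => -Real.log q / π with haq
  have haq_pos : ∀ q ∈ Set.Ioo (0:ℝ) 1, 0 < aq q := fun q hq =>
    div_pos (neg_pos.mpr (Real.log_neg hq.1 hq.2)) Real.pi_pos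
  have hq_exp : ∀ q ∈ Set.Ioo (0:ℝ) 1, Real.exp (-π * aq q) = q := by
    intro q hq
    rw [haq]
    simp only
    rw [show -π * (-Real.log q / π) = Real.log q by
      field_simp]
    exact Real.exp_log hq.1
  have ha_t : Filter.Tendsto aq (nhdsWithin 1 (Set.Iio 1)) (nhdsWithin 0 (Set.Ioi 0)) := by
    rw [tendsto_nhdsWithin_iff]
    constructor
    · have hc : ContinuousAt (fun q : ℝ => -Real.log q / π) 1 :=
        ((Real.continuousAt_log one_ne_zero).neg.div_const π)
      have h2 : Filter.Tendsto (fun q : ℝ => -Real.log q / π) (nhdsWithin 1 (Set.Iio 1))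
          (nhds (-Real.log 1 / π)) := hc.tendsto.mono_left nhdsWithin_le_nhds
      simpa using h2
    · exact hmem.mono fun q hq => haq_pos q hq
  have hmem1 : ∀ᶠ q in nhdsWithin (1:ℝ) (Set.Iio 1), aq q ∈ Set.Ioc (0:ℝ) 1 := by
    have : Set.Ioc (0:ℝ) 1 ∈ nhdsWithin (0:ℝ) (Set.Ioi 0) := by
      exact Filter.mem_of_superset (Ioo_mem_nhdsGT_of_mem ⟨le_refl 0, by norm_num⟩)
        Set.Ioo_subset_Ioc_self
    exact ha_t.eventually this
  have hEsq : Filter.Tendsto (fun q => 2 * Th (4 * aq q) - Th (aq q))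
      (nhdsWithin 1 (Set.Iio 1)) (nhds 0) := by
    apply squeeze_zero'
    · filter_upwards [hmem1] with q hq
      exact (E_bound hq.1 hq.2).1
    · filter_upwards [hmem1] with q hq
      exact (E_bound hq.1 hq.2).2
    · exact B_tendsto.comp ha_t
  have hfin := (hEsq.div_const 2).const_add (-1/2 : ℝ)
  rw [show (-1/2 : ℝ) + 0/2 = -1/2 by norm_num] at hfin
  refine hfin.congr' ?_ |>.mono_left le_rfl
  filter_upwards [hmem] with q hq
  have hk := key (haq_pos q hq)
  rw [hq_exp q hq] at hk
  exact hk.symm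
end

section
/- Define a(t) := −1/π + (2/π)·∑_{k=1}^∞ (−1)^{k+1} e^{−t k²} for t > 0. Then lim_{t→0⁺} a(t) = 0 and lim_{t→∞} a(t) = −1/π. -/
open Real Filter
set_option maxHeartbeats 1000000

private lemma kl_summable_exp_sq {t : ℝ} (ht : 0 < t) :
    Summable (fun n : ℕ => Real.exp (-t * (n : ℝ) ^ 2)) := by
  have hg : Summable (fun n : ℕ => Real.exp (-t) ^ n) :=
    summable_geometric_of_lt_one (Real.exp_pos _).le (Real.exp_lt_one_iff.mpr (by linarith))
  refine Summable.of_nonneg_of_le (fun n => (Real.exp_pos _).le) (fun n => ?_) hg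
  rw [← Real.exp_nat_mul]
  apply Real.exp_le_exp.mpr
  have h : (n : ℝ) ≤ (n : ℝ) ^ 2 := by
    rcases Nat.eq_zero_or_pos n with h | h
    · simp [h]
    · have : (1 : ℝ) ≤ (n : ℝ) := by exact_mod_cast h
      nlinarith
  nlinarith

private lemma kl_one_sub_exp_neg_ge {s : ℝ} (h0 : 0 ≤ s) (h1 : s ≤ 1) :
    s / 2 ≤ 1 - Real.exp (-s) := by
  have h := Real.add_one_le_exp s
  have h2 : Real.exp (-s) ≤ 1 / (1 + s) := by
    rw [Real.exp_neg]
    apply inv_le_of_inv_le₀ (by positivity)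
    rw [one_div, inv_inv]; linarith
  have h3 : 1 / (1 + s) ≤ 1 - s / 2 := by
    rw [div_le_iff₀ (by linarith)]
    nlinarith
  linarith

private lemma kl_sum_exp_sq_le {t : ℝ} (ht : 0 < t) (ht1 : t ≤ 1) :
    ∑' n : ℕ, Real.exp (-t * (n : ℝ) ^ 2) ≤ 5 / Real.sqrt t := by
  set s := Real.sqrt t with hs
  have hs0 : 0 < s := Real.sqrt_pos.mpr ht
  have hs1 : s ≤ 1 := by
    rw [hs, show (1:ℝ) = Real.sqrt 1 by simp]
    exact Real.sqrt_le_sqrt ht1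
  have hss : s ^ 2 = t := Real.sq_sqrt ht.le
  obtain ⟨N, hN1, hNle⟩ : ∃ N : ℕ, (1:ℝ) / s ≤ N ∧ (N : ℝ) ≤ 1 / s + 1 :=
    ⟨⌈1 / s⌉₊, Nat.le_ceil _, (Nat.ceil_lt_add_one (by positivity)).le⟩
  have hsum := kl_summable_exp_sq ht
  rw [← Summable.sum_add_tsum_nat_add N hsum]
  have h1 : ∑ i ∈ Finset.range N, Real.exp (-t * (i : ℝ) ^ 2) ≤ N := by
    calc ∑ i ∈ Finset.range N, Real.exp (-t * (i : ℝ) ^ 2)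
        ≤ ∑ i ∈ Finset.range N, 1 := by
          apply Finset.sum_le_sum
          intro i _
          exact Real.exp_le_one_iff.mpr (by nlinarith [sq_nonneg ((i:ℝ))])
      _ = N := by simp
  have hts : t / s = s := by rw [div_eq_iff hs0.ne']; nlinarith [hss]
  have htN : s ≤ t * N := by
    have h := mul_le_mul_of_nonneg_left hN1 ht.le
    calc s = t * (1/s) := ((mul_one_div t s).trans hts).symm
      _ ≤ t * N := h
  have h2 : ∑' i : ℕ, Real.exp (-t * ((i + N : ℕ) : ℝ) ^ 2) ≤ 2 / s := by
    have hgeo : ∀ i : ℕ, Real.exp (-t * ((i + N : ℕ) : ℝ) ^ 2) ≤ Real.exp (-(t * N)) ^ i := by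
      intro i
      rw [← Real.exp_nat_mul]
      apply Real.exp_le_exp.mpr
      push_cast
      have hkey : (0:ℝ) ≤ t * ((i:ℝ)^2 + (i:ℝ)*N + (N:ℝ)^2) :=
        mul_nonneg ht.le (by positivity)
      nlinarith
    have hr0 : (0:ℝ) ≤ Real.exp (-(t * N)) := (Real.exp_pos _).le
    have hr1 : Real.exp (-(t * N)) < 1 := Real.exp_lt_one_iff.mpr (by nlinarith)
    calc ∑' i : ℕ, Real.exp (-t * ((i + N : ℕ) : ℝ) ^ 2)
        ≤ ∑' i : ℕ, Real.exp (-(t * N)) ^ i := by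
          apply Summable.tsum_le_tsum hgeo _ (summable_geometric_of_lt_one hr0 hr1)
          exact (summable_nat_add_iff N).mpr hsum
      _ = (1 - Real.exp (-(t * N)))⁻¹ := tsum_geometric_of_lt_one hr0 hr1
      _ ≤ 2 / s := by
          have hmono : Real.exp (-(t*N)) ≤ Real.exp (-s) := Real.exp_le_exp.mpr (by linarith)
          have hlow := kl_one_sub_exp_neg_ge hs0.le hs1
          rw [inv_le_iff_one_le_mul₀ (by nlinarith)]
          rw [div_mul_eq_mul_div, le_div_iff₀ hs0]
          nlinarith
  have hs_le : (1:ℝ) ≤ 1 / s := by rw [le_div_iff₀ hs0]; simpa using hs1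
  calc _ ≤ (N : ℝ) + 2 / s := by gcongr
    _ ≤ (1/s + 1) + 2/s := by linarith
    _ ≤ 5 / s := by
        have : (1:ℝ) ≤ 1/s := hs_le
        have h4 : 1/s + 1 + 2/s ≤ 1/s + 1/s + 2/s := by linarith
        calc 1/s + 1 + 2/s ≤ 1/s + 1/s + 2/s := h4
          _ = 4/s := by ring
          _ ≤ 5/s := by gcongr <;> norm_num


private lemma kl_ptwise {t : ℝ} (ht : 0 < t) (n : ℕ) :
    (n : ℝ) ^ 2 * Real.exp (-t * (n : ℝ) ^ 2) ≤ (2 / t) * Real.exp (-(t/2) * (n : ℝ) ^ 2) := by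
  have h1 : Real.exp (-t * (n : ℝ) ^ 2)
      = Real.exp (-(t/2) * (n : ℝ) ^ 2) * Real.exp (-(t/2) * (n : ℝ) ^ 2) := by
    rw [← Real.exp_add]; ring_nf
  have h2 : (t/2) * (n:ℝ)^2 ≤ Real.exp ((t/2) * (n:ℝ)^2) := by
    have := Real.add_one_le_exp ((t/2) * (n:ℝ)^2)
    linarith
  have h3 : (n:ℝ)^2 * Real.exp (-(t/2) * (n:ℝ)^2) ≤ 2 / t := by
    rw [show -(t/2) * (n:ℝ)^2 = -((t/2) * (n:ℝ)^2) by ring, Real.exp_neg,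
      mul_inv_le_iff₀ (Real.exp_pos _), div_mul_eq_mul_div, le_div_iff₀ ht]
    nlinarith
  calc (n : ℝ) ^ 2 * Real.exp (-t * (n : ℝ) ^ 2)
      = ((n:ℝ)^2 * Real.exp (-(t/2) * (n : ℝ) ^ 2)) * Real.exp (-(t/2) * (n : ℝ) ^ 2) := by
        rw [h1]; ring
    _ ≤ (2 / t) * Real.exp (-(t/2) * (n : ℝ) ^ 2) := by
        apply mul_le_mul_of_nonneg_right h3 (Real.exp_pos _).le

private lemma kl_summable_sq_exp_sq {t : ℝ} (ht : 0 < t) :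
    Summable (fun n : ℕ => (n : ℝ) ^ 2 * Real.exp (-t * (n : ℝ) ^ 2)) := by
  apply Summable.of_nonneg_of_le (fun n => by positivity) (kl_ptwise ht)
  exact (kl_summable_exp_sq (by linarith : (0:ℝ) < t/2)).mul_left _

private lemma kl_sum_sq_exp_sq_le {t : ℝ} (ht : 0 < t) (ht1 : t ≤ 1) :
    ∑' n : ℕ, (n : ℝ) ^ 2 * Real.exp (-t * (n : ℝ) ^ 2) ≤ 20 / (t * Real.sqrt t) := by
  have ht2 : (0:ℝ) < t/2 := by linarith
  have h1 : ∑' n : ℕ, (n : ℝ) ^ 2 * Real.exp (-t * (n : ℝ) ^ 2)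
      ≤ ∑' n : ℕ, (2 / t) * Real.exp (-(t/2) * (n : ℝ) ^ 2) := by
    apply Summable.tsum_le_tsum (kl_ptwise ht) (kl_summable_sq_exp_sq ht)
    exact (kl_summable_exp_sq ht2).mul_left _
  have h2 : ∑' n : ℕ, (2 / t) * Real.exp (-(t/2) * (n : ℝ) ^ 2)
      = (2 / t) * ∑' n : ℕ, Real.exp (-(t/2) * (n : ℝ) ^ 2) := tsum_mul_left
  have h3 := kl_sum_exp_sq_le ht2 (by linarith)
  have hsqrt : Real.sqrt t / 2 ≤ Real.sqrt (t/2) := by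
    have h4 : (Real.sqrt t / 2) ^ 2 ≤ t / 2 := by
      have := Real.sq_sqrt ht.le
      nlinarith
    calc Real.sqrt t / 2 = Real.sqrt ((Real.sqrt t / 2) ^ 2) :=
          (Real.sqrt_sq (by positivity)).symm
      _ ≤ Real.sqrt (t/2) := Real.sqrt_le_sqrt h4
  have hst : 0 < Real.sqrt t := Real.sqrt_pos.mpr ht
  have hst2 : 0 < Real.sqrt (t/2) := Real.sqrt_pos.mpr ht2
  have h5 : 5 / Real.sqrt (t/2) ≤ 10 / Real.sqrt t := by
    rw [div_le_div_iff₀ hst2 hst]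
    nlinarith
  have h6 : ∑' n : ℕ, Real.exp (-(t/2) * (n : ℝ) ^ 2) ≤ 10 / Real.sqrt t := le_trans h3 h5
  have h7 : (0:ℝ) < 2/t := by positivity
  calc ∑' n : ℕ, (n : ℝ) ^ 2 * Real.exp (-t * (n : ℝ) ^ 2)
      ≤ (2 / t) * ∑' n : ℕ, Real.exp (-(t/2) * (n : ℝ) ^ 2) := h2 ▸ h1
    _ ≤ (2 / t) * (10 / Real.sqrt t) := by
        apply mul_le_mul_of_nonneg_left h6 h7.le
    _ = 20 / (t * Real.sqrt t) := by
        field_simp; ring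


private lemma kl_summable_f {t : ℝ} (ht : 0 < t) :
    Summable (fun k : ℕ => (-1 : ℝ) ^ k * Real.exp (-t * ((k : ℝ) + 1) ^ 2)) := by
  apply Summable.of_abs
  have h : ∀ k : ℕ, |(-1 : ℝ) ^ k * Real.exp (-t * ((k : ℝ) + 1) ^ 2)|
      = Real.exp (-t * (((k+1 : ℕ)) : ℝ) ^ 2) := by
    intro k
    rw [abs_mul, abs_pow, abs_neg, abs_one, one_pow, one_mul,
      abs_of_pos (Real.exp_pos _)]
    push_cast
    ring_nf
  rw [funext h]
  exact ((summable_nat_add_iff 1).mpr (kl_summable_exp_sq ht))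

private lemma kl_key {t : ℝ} (ht : 0 < t) (ht1 : t ≤ 1) :
    |(∑' k : ℕ, (-1 : ℝ) ^ k * Real.exp (-t * ((k : ℝ) + 1) ^ 2)) - 1/2|
      ≤ 258 * Real.sqrt t := by
  set a : ℕ → ℝ := fun n => Real.exp (-t * (n : ℝ) ^ 2) with ha_def
  have ha_pos : ∀ n, 0 < a n := fun n => Real.exp_pos _
  have ha_sum : Summable a := kl_summable_exp_sq ht
  set f : ℕ → ℝ := fun k => (-1 : ℝ) ^ k * a (k + 1) with hf_def
  have hf_eq : (fun k : ℕ => (-1 : ℝ) ^ k * Real.exp (-t * ((k : ℝ) + 1) ^ 2)) = f := by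
    funext k
    simp only [hf_def, ha_def]
    push_cast
    ring_nf
  rw [hf_eq]
  set h : ℕ → ℝ := fun n => (-1 : ℝ) ^ n * a n with hh_def
  have hf_sum : Summable f := by
    rw [← hf_eq]; exact kl_summable_f ht
  have hh_sum : Summable h := by
    apply Summable.of_abs
    have : ∀ n, |h n| = a n := by
      intro n
      simp only [hh_def, abs_mul, abs_pow, abs_neg, abs_one, one_pow, one_mul,
        abs_of_pos (ha_pos n)]
    rw [funext this]; exact ha_sum
  set S := ∑' k, f k with hS_def
  set T := ∑' k, h k with hT_def
  -- T = 1 - S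
  have hT : T = 1 - S := by
    rw [hT_def, Summable.tsum_eq_zero_add hh_sum]
    have h0 : h 0 = 1 := by simp [hh_def, ha_def]
    have h1 : ∀ k : ℕ, h (k + 1) = -f k := by
      intro k
      simp only [hh_def, hf_def, pow_succ]
      ring
    rw [h0, funext h1, tsum_neg, hS_def]
    ring
  -- summability of subsequences
  have hinj2 : Function.Injective (fun m : ℕ => 2 * m) := fun a b hab => by simp only at hab; omega
  have hinj21 : Function.Injective (fun m : ℕ => 2 * m + 1) := fun a b hab => by simp only at hab; omega
  have hinj22 : Function.Injective (fun m : ℕ => 2 * m + 2) := fun a b hab => by simp only at hab; omega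
  have hsa2 : Summable (fun m : ℕ => a (2 * m)) := ha_sum.comp_injective hinj2
  have hsa21 : Summable (fun m : ℕ => a (2 * m + 1)) := ha_sum.comp_injective hinj21
  have hsa22 : Summable (fun m : ℕ => a (2 * m + 2)) := ha_sum.comp_injective hinj22
  -- even/odd values
  have hhe : ∀ m : ℕ, h (2 * m) = a (2 * m) := by
    intro m; simp [hh_def, pow_mul]
  have hho : ∀ m : ℕ, h (2 * m + 1) = -a (2 * m + 1) := by
    intro m; simp [hh_def, pow_succ, pow_mul]
  have hfe : ∀ m : ℕ, f (2 * m) = a (2 * m + 1) := by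
    intro m; simp [hf_def, pow_mul]
  have hfo : ∀ m : ℕ, f (2 * m + 1) = -a (2 * m + 2) := by
    intro m
    simp only [hf_def, pow_succ, pow_mul]
    norm_num
  have hT2 : T = (∑' m, a (2 * m)) - ∑' m, a (2 * m + 1) := by
    rw [hT_def, ← tsum_even_add_odd (by rw [funext hhe]; exact hsa2)
      (by rw [funext hho]; exact hsa21.neg), funext hhe, funext hho, tsum_neg]
    ring
  have hS2 : S = (∑' m, a (2 * m + 1)) - ∑' m, a (2 * m + 2) := by
    rw [hS_def, ← tsum_even_add_odd (by rw [funext hfe]; exact hsa21)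
      (by rw [funext hfo]; exact hsa22.neg), funext hfe, funext hfo, tsum_neg]
    ring
  -- g and its sum
  set g : ℕ → ℝ := fun m => a (2 * m) - 2 * a (2 * m + 1) + a (2 * m + 2) with hg_def
  have hg_sum : Summable g := ((hsa2.sub (hsa21.mul_left 2)).add hsa22)
  have hgsum_eq : ∑' m, g m = 1 - 2 * S := by
    have : ∑' m, g m = ((∑' m, a (2 * m)) - 2 * ∑' m, a (2 * m + 1)) + ∑' m, a (2 * m + 2) := by
      rw [hg_def]
      rw [Summable.tsum_add (hsa2.sub (hsa21.mul_left 2)) hsa22, Summable.tsum_sub hsa2 (hsa21.mul_left 2),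
        tsum_mul_left]
    rw [this]
    have := hT
    rw [hT2] at this
    rw [hS2]
    linarith
  -- pointwise bound on |g|
  have hg_bd : ∀ m : ℕ, |g m| ≤ 25 * t^2 * (m : ℝ)^2 * Real.exp (-t * (m:ℝ)^2)
      + (t^2 + 2*t) * Real.exp (-t * (m:ℝ)^2) := by
    intro m
    set n : ℕ := 2 * m with hn_def
    set e1 : ℝ := Real.exp (-t * (n : ℝ) ^ 2) with he1
    set u : ℝ := Real.exp (-t * (2 * (n:ℝ) + 1)) with hu
    set w : ℝ := Real.exp (-(2 * t)) with hw
    have ha1 : a (n + 1) = e1 * u := by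
      rw [ha_def, he1, hu, ← Real.exp_add]
      push_cast; ring_nf
    have ha2 : a (n + 2) = e1 * u * (u * w) := by
      rw [ha_def, he1, hu, hw, ← Real.exp_add, ← Real.exp_add, ← Real.exp_add]
      push_cast; ring_nf
    have hgm : g m = e1 * ((1 - u)^2 - u * u * (1 - w)) := by
      have : g m = a n - 2 * a (n + 1) + a (n + 2) := by
        rw [hg_def, hn_def]
      have han : a n = e1 := rfl
      rw [this, han, ha1, ha2]
      ring
    have hu0 : 0 < u := Real.exp_pos _
    have hn0 : (0:ℝ) ≤ (n:ℝ) := Nat.cast_nonneg n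
    have hu1 : u ≤ 1 := Real.exp_le_one_iff.mpr (by nlinarith)
    have hw0 : 0 < w := Real.exp_pos _
    have hw1 : w ≤ 1 := Real.exp_le_one_iff.mpr (by nlinarith)
    have h1w : 1 - w ≤ 2 * t := by
      have := Real.add_one_le_exp (-(2*t))
      rw [hw]; linarith
    have h1u : 1 - u ≤ t * (2*(n:ℝ)+1) := by
      have := Real.add_one_le_exp (-t * (2*(n:ℝ)+1))
      rw [hu]; nlinarith
    have habs : |(1 - u)^2 - u * u * (1 - w)| ≤ (t * (2*(n:ℝ)+1))^2 + 2*t := by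
      rw [abs_le]
      constructor
      · nlinarith [sq_nonneg (1-u), sq_nonneg (t*(2*(n:ℝ)+1))]
      · nlinarith [sq_nonneg (1-u)]
    have he1pos : 0 < e1 := Real.exp_pos _
    have hgabs : |g m| = e1 * |(1 - u)^2 - u * u * (1 - w)| := by
      rw [hgm, abs_mul, abs_of_pos he1pos]
    have he1le : e1 ≤ Real.exp (-t * (m:ℝ)^2) := by
      rw [he1]
      apply Real.exp_le_exp.mpr
      have : ((n:ℕ):ℝ) = 2*(m:ℝ) := by rw [hn_def]; push_cast; ring
      rw [this]
      nlinarith [sq_nonneg ((m:ℝ)), Nat.cast_nonneg (α := ℝ) m]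
    have hm01 : (m:ℝ) = 0 ∨ 1 ≤ (m:ℝ) := by
      rcases Nat.eq_zero_or_pos m with h | h
      · left; simp [h]
      · right; exact_mod_cast h
    have hcoef : (t * (2*(n:ℝ)+1))^2 + 2*t ≤ 25*t^2*(m:ℝ)^2 + (t^2 + 2*t) := by
      have hnm : (n:ℝ) = 2*(m:ℝ) := by rw [hn_def]; push_cast; ring
      rw [hnm]
      rcases hm01 with h | h
      · rw [h]; nlinarith
      · nlinarith [sq_nonneg (m:ℝ), sq_nonneg t]
    calc |g m| = e1 * |(1 - u)^2 - u * u * (1 - w)| := hgabs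
      _ ≤ Real.exp (-t * (m:ℝ)^2) * ((t * (2*(n:ℝ)+1))^2 + 2*t) := by
          apply mul_le_mul he1le habs (abs_nonneg _) (Real.exp_pos _).le
      _ ≤ Real.exp (-t * (m:ℝ)^2) * (25*t^2*(m:ℝ)^2 + (t^2 + 2*t)) := by
          apply mul_le_mul_of_nonneg_left hcoef (Real.exp_pos _).le
      _ = 25 * t^2 * (m : ℝ)^2 * Real.exp (-t * (m:ℝ)^2)
            + (t^2 + 2*t) * Real.exp (-t * (m:ℝ)^2) := by ring
  -- sum the bound
  set s := Real.sqrt t with hs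
  have hs0 : 0 < s := Real.sqrt_pos.mpr ht
  have hss : s ^ 2 = t := Real.sq_sqrt ht.le
  have hGsum : Summable (fun m : ℕ => 25 * t^2 * ((m : ℝ)^2 * Real.exp (-t * (m:ℝ)^2))
      + (t^2 + 2*t) * Real.exp (-t * (m:ℝ)^2)) :=
    ((kl_summable_sq_exp_sq ht).mul_left _).add (ha_sum.mul_left _)
  have hg_bd' : ∀ m : ℕ, |g m| ≤ 25 * t^2 * ((m : ℝ)^2 * Real.exp (-t * (m:ℝ)^2))
      + (t^2 + 2*t) * Real.exp (-t * (m:ℝ)^2) := by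
    intro m
    have := hg_bd m
    linarith [this]
  have habs_sum : Summable (fun m => |g m|) :=
    Summable.of_nonneg_of_le (fun m => abs_nonneg _) hg_bd' hGsum
  have hsum_bd : ∑' m, |g m| ≤ 515 * s := by
    have h1 : ∑' m, |g m| ≤ ∑' m : ℕ, (25 * t^2 * ((m : ℝ)^2 * Real.exp (-t * (m:ℝ)^2))
        + (t^2 + 2*t) * Real.exp (-t * (m:ℝ)^2)) :=
      Summable.tsum_le_tsum hg_bd' habs_sum hGsum
    have h2 : ∑' m : ℕ, (25 * t^2 * ((m : ℝ)^2 * Real.exp (-t * (m:ℝ)^2))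
        + (t^2 + 2*t) * Real.exp (-t * (m:ℝ)^2))
        = 25 * t^2 * (∑' m : ℕ, (m : ℝ)^2 * Real.exp (-t * (m:ℝ)^2))
          + (t^2 + 2*t) * (∑' m : ℕ, Real.exp (-t * (m:ℝ)^2)) := by
      rw [Summable.tsum_add ((kl_summable_sq_exp_sq ht).mul_left _) (ha_sum.mul_left _),
        tsum_mul_left, tsum_mul_left]
    have h3 := kl_sum_sq_exp_sq_le ht ht1
    have h4 := kl_sum_exp_sq_le ht ht1
    have hpos1 : (0:ℝ) ≤ 25 * t^2 := by positivity
    have hpos2 : (0:ℝ) ≤ t^2 + 2*t := by positivity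
    have h5 : 25 * t^2 * (∑' m : ℕ, (m : ℝ)^2 * Real.exp (-t * (m:ℝ)^2))
        ≤ 25 * t^2 * (20 / (t * s)) := mul_le_mul_of_nonneg_left h3 hpos1
    have h6 : (t^2 + 2*t) * (∑' m : ℕ, Real.exp (-t * (m:ℝ)^2))
        ≤ (t^2 + 2*t) * (5 / s) := mul_le_mul_of_nonneg_left h4 hpos2
    have e1 : 25 * t^2 * (20 / (t * s)) = 500 * s := by
      field_simp
      ring
      nlinarith [hss]
    have e2 : (t^2 + 2*t) * (5 / s) ≤ 15 * s := by
      rw [show (t^2 + 2*t) * (5 / s) = (5*t^2 + 10*t)/s by ring, div_le_iff₀ hs0]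
      nlinarith [hss]
    rw [h2] at h1
    linarith
  -- conclude
  have hSdiff : S - 1/2 = -(∑' m, g m) / 2 := by linarith [hgsum_eq]
  have hnorm : |∑' m, g m| ≤ ∑' m, |g m| := by
    have := norm_tsum_le_tsum_norm (f := g) (by simpa [Real.norm_eq_abs] using habs_sum)
    simpa [Real.norm_eq_abs] using this
  calc |S - 1/2| = |∑' m, g m| / 2 := by
        rw [hSdiff, abs_div, abs_neg, abs_two]
    _ ≤ (515 * s) / 2 := by
        have := le_trans hnorm hsum_bd
        linarith
    _ ≤ 258 * s := by linarith [hs0]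

private lemma kl_tendsto_half :
    Filter.Tendsto
      (fun t : ℝ => ∑' k : ℕ, (-1 : ℝ) ^ k * Real.exp (-t * ((k : ℝ) + 1) ^ 2))
      (nhdsWithin 0 (Set.Ioi 0)) (nhds (1/2)) := by
  rw [← tendsto_sub_nhds_zero_iff]
  apply squeeze_zero_norm' (a := fun t : ℝ => 258 * Real.sqrt t)
  · have hmem : Set.Ioc (0:ℝ) 1 ∈ nhdsWithin 0 (Set.Ioi 0) :=
      Ioc_mem_nhdsGT_of_mem (by constructor <;> norm_num)
    filter_upwards [hmem] with t ht
    rw [Real.norm_eq_abs]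
    exact kl_key ht.1 ht.2
  · have h1 : Filter.Tendsto (fun t : ℝ => 258 * Real.sqrt t) (nhds 0) (nhds 0) := by
      have h2 := (Real.continuous_sqrt.tendsto 0).const_mul (258:ℝ)
      simpa using h2
    exact h1.mono_left nhdsWithin_le_nhds

private lemma kl_tendsto_zero :
    Filter.Tendsto
      (fun t : ℝ => ∑' k : ℕ, (-1 : ℝ) ^ k * Real.exp (-t * ((k : ℝ) + 1) ^ 2))
      Filter.atTop (nhds 0) := by
  apply squeeze_zero_norm' (a := fun t : ℝ => 2 * Real.exp (-t))
  · filter_upwards [eventually_ge_atTop (1:ℝ)] with t ht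
    have ht0 : (0:ℝ) < t := lt_of_lt_of_le one_pos ht
    have hbd : ∀ k : ℕ, Real.exp (-t * ((k : ℝ) + 1) ^ 2)
        ≤ Real.exp (-t) * Real.exp (-1 : ℝ) ^ k := by
      intro k
      rw [← Real.exp_nat_mul, ← Real.exp_add]
      apply Real.exp_le_exp.mpr
      have hk : (0:ℝ) ≤ (k:ℝ) := Nat.cast_nonneg k
      nlinarith [sq_nonneg ((k:ℝ))]
    have hgeo : Summable (fun k : ℕ => Real.exp (-t) * Real.exp (-1 : ℝ) ^ k) :=
      (summable_geometric_of_lt_one (Real.exp_pos _).le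
        (Real.exp_lt_one_iff.mpr (by norm_num))).mul_left _
    have hnorm_eq : ∀ k : ℕ, ‖(-1 : ℝ) ^ k * Real.exp (-t * ((k : ℝ) + 1) ^ 2)‖
        = Real.exp (-t * ((k : ℝ) + 1) ^ 2) := by
      intro k
      rw [Real.norm_eq_abs, abs_mul, abs_pow, abs_neg, abs_one, one_pow, one_mul,
        abs_of_pos (Real.exp_pos _)]
    have hsum_norm : Summable
        (fun k : ℕ => ‖(-1 : ℝ) ^ k * Real.exp (-t * ((k : ℝ) + 1) ^ 2)‖) := by
      apply Summable.of_nonneg_of_le (fun k => norm_nonneg _) (fun k => ?_) hgeo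
      rw [hnorm_eq k]; exact hbd k
    have hI : (1 - Real.exp (-1 : ℝ))⁻¹ ≤ 2 := by
      have h2 : (2:ℝ) ≤ Real.exp 1 := by nlinarith [Real.exp_one_gt_d9]
      have h3 : Real.exp (-1 : ℝ) ≤ 1/2 := by
        rw [Real.exp_neg]
        rw [show (1:ℝ)/2 = (2:ℝ)⁻¹ by norm_num]
        exact inv_anti₀ (by norm_num) h2
      rw [inv_le_iff_one_le_mul₀ (by linarith)]
      nlinarith
    calc ‖∑' k : ℕ, (-1 : ℝ) ^ k * Real.exp (-t * ((k : ℝ) + 1) ^ 2)‖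
        ≤ ∑' k : ℕ, ‖(-1 : ℝ) ^ k * Real.exp (-t * ((k : ℝ) + 1) ^ 2)‖ :=
          norm_tsum_le_tsum_norm hsum_norm
      _ ≤ ∑' k : ℕ, Real.exp (-t) * Real.exp (-1 : ℝ) ^ k := by
          apply Summable.tsum_le_tsum (fun k => ?_) hsum_norm hgeo
          rw [hnorm_eq k]; exact hbd k
      _ = Real.exp (-t) * (1 - Real.exp (-1 : ℝ))⁻¹ := by
          rw [tsum_mul_left, tsum_geometric_of_lt_one (Real.exp_pos _).le
            (Real.exp_lt_one_iff.mpr (by norm_num))]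
      _ ≤ 2 * Real.exp (-t) := by
          rw [mul_comm]
          exact mul_le_mul_of_nonneg_right hI (Real.exp_pos _).le
  · have := Real.tendsto_exp_neg_atTop_nhds_zero.const_mul (2:ℝ)
    simpa using this

theorem kernel_limits :
    Filter.Tendsto
      (fun t : ℝ => -1 / Real.pi +
        (2 / Real.pi) * ∑' k : ℕ, (-1 : ℝ) ^ k * Real.exp (-t * ((k : ℝ) + 1) ^ 2))
      (nhdsWithin 0 (Set.Ioi 0)) (nhds 0) ∧
    Filter.Tendsto
      (fun t : ℝ => -1 / Real.pi +
        (2 / Real.pi) * ∑' k : ℕ, (-1 : ℝ) ^ k * Real.exp (-t * ((k : ℝ) + 1) ^ 2))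
      Filter.atTop (nhds (-1 / Real.pi)) := by
  constructor
  · have h1 := (kl_tendsto_half.const_mul (2 / Real.pi)).const_add (-1 / Real.pi)
    have hval : -1 / Real.pi + 2 / Real.pi * (1/2) = 0 := by
      field_simp
      ring
    rwa [hval] at h1
  · have h1 := (kl_tendsto_zero.const_mul (2 / Real.pi)).const_add (-1 / Real.pi)
    have hval : -1 / Real.pi + 2 / Real.pi * 0 = -1 / Real.pi := by ring
    rwa [hval] at h1
end

section
/- For every real frequency ω, the Fourier transform of the shifted kernel a_s (extended by 0 on t < 0) satisfies â_s(ω) = ∫_0^∞ e^{−iωt} a_s(t) dt = (2/π)·∑_{k=1}^∞ (−1)^{k+1} (k² − iω)/(k⁴ + ω²). -/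
open Complex MeasureTheory

lemma cexp_integrableOn_aux (c : ℂ) (hc : 0 < c.re) :
    IntegrableOn (fun t : ℝ => Complex.exp (-(c * t))) (Set.Ioi 0) := by
  apply Integrable.mono' (exp_neg_integrableOn_Ioi 0 hc)
  · apply Continuous.aestronglyMeasurable
    exact Complex.continuous_exp.comp (by continuity)
  · filter_upwards with t
    rw [Complex.norm_exp]
    simp [Complex.mul_re, mul_comm]

lemma integral_cexp_neg_mul_aux (c : ℂ) (hc : 0 < c.re) :
    ∫ t in Set.Ioi (0 : ℝ), Complex.exp (-(c * t)) = 1 / c := by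
  have hc0 : c ≠ 0 := fun h => by simp [h] at hc
  have hd : ∀ x ∈ Set.Ici (0 : ℝ),
      HasDerivAt (fun t : ℝ => -Complex.exp (-(c * t)) / c) (Complex.exp (-(c * x))) x := by
    intro x _
    have h1 : HasDerivAt (fun z : ℂ => -Complex.exp (-(c * z)) / c)
        (Complex.exp (-(c * x))) (x : ℂ) := by
      have h2 := (((hasDerivAt_id (x : ℂ)).const_mul c).neg.cexp.neg).div_const c
      refine h2.congr_deriv ?_
      field_simp
      simp
    exact h1.comp_ofReal
  have ht : Filter.Tendsto (fun t : ℝ => -Complex.exp (-(c * t)) / c)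
      Filter.atTop (nhds 0) := by
    rw [tendsto_zero_iff_norm_tendsto_zero]
    have : (fun t : ℝ => ‖-Complex.exp (-(c * t)) / c‖)
        = fun t : ℝ => Real.exp (-(c.re * t)) / ‖c‖ := by
      ext t
      rw [norm_div, norm_neg, Complex.norm_exp]
      congr 1
      simp [Complex.mul_re]
    rw [this]
    have h3 : Filter.Tendsto (fun t : ℝ => -(c.re * t)) Filter.atTop Filter.atBot := by
      exact Filter.tendsto_neg_atBot_iff.mpr (Filter.Tendsto.const_mul_atTop hc Filter.tendsto_id)
    simpa using (Real.tendsto_exp_atBot.comp h3).div_const ‖c‖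
  have := integral_Ioi_of_hasDerivAt_of_tendsto' hd (cexp_integrableOn_aux c hc) ht
  rw [this]
  simp [neg_div, hc0]

lemma real_exp_integral_aux (b : ℝ) (hb : 0 < b) :
    ∫ t in Set.Ioi (0 : ℝ), Real.exp (-(b * t)) = 1 / b := by
  have h1 := integral_cexp_neg_mul_aux (b : ℂ) (by simpa using hb)
  have h2 : ((∫ t in Set.Ioi (0 : ℝ), Real.exp (-(b * t)) : ℝ) : ℂ)
      = ∫ t in Set.Ioi (0 : ℝ), Complex.exp (-((b : ℂ) * t)) := by
    rw [show ((∫ t in Set.Ioi (0 : ℝ), Real.exp (-(b * t)) : ℝ) : ℂ)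
        = ∫ t in Set.Ioi (0 : ℝ), ((Real.exp (-(b * t)) : ℝ) : ℂ) from integral_ofReal.symm]
    apply setIntegral_congr_fun (measurableSet_Ioi)
    intro t _
    push_cast
    ring_nf
  rw [← h2] at h1
  exact_mod_cast h1

theorem shifted_kernel_fourier (ω : ℝ) :
    ∫ t in Set.Ioi (0 : ℝ),
        Complex.exp (-Complex.I * ω * t) *
          ((2 / Real.pi) * ∑' k : ℕ, (-1 : ℝ) ^ k * Real.exp (-t * ((k : ℝ) + 1) ^ 2) : ℝ) =
      (2 / Real.pi) * ∑' k : ℕ, (-1 : ℂ) ^ k *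
        (((k : ℂ) + 1) ^ 2 - Complex.I * ω) / (((k : ℂ) + 1) ^ 4 + (ω : ℂ) ^ 2) := by
  set F : ℕ → ℝ → ℂ := fun k t =>
    Complex.exp (-Complex.I * ω * t) *
      (((2 / Real.pi : ℝ) : ℂ) *
        (((-1 : ℝ) ^ k * Real.exp (-t * ((k : ℝ) + 1) ^ 2) : ℝ) : ℂ)) with hF
  have key : ∀ t : ℝ,
      Complex.exp (-Complex.I * ω * t) *
        ((2 / Real.pi) * ∑' k : ℕ, (-1 : ℝ) ^ k * Real.exp (-t * ((k : ℝ) + 1) ^ 2) : ℝ)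
      = ∑' k : ℕ, F k t := by
    intro t
    rw [Complex.ofReal_mul, Complex.ofReal_tsum, ← tsum_mul_left, ← tsum_mul_left]
  -- rewrite each F k as a constant times a decaying exponential
  have hFeq : ∀ k t, F k t = (((2 / Real.pi : ℝ) : ℂ) * (-1 : ℂ) ^ k) *
      Complex.exp (-((((k : ℂ) + 1) ^ 2 + Complex.I * ω) * t)) := by
    intro k t
    rw [hF]
    simp only
    rw [Complex.ofReal_mul, Complex.ofReal_exp]
    have : Complex.exp (-Complex.I * ↑ω * ↑t) * Complex.exp ((-t * ((k : ℝ) + 1) ^ 2 : ℝ) : ℂ)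
        = Complex.exp (-((((k : ℂ) + 1) ^ 2 + Complex.I * ω) * t)) := by
      rw [← Complex.exp_add]
      congr 1
      push_cast
      ring
    push_cast
    calc Complex.exp (-Complex.I * ↑ω * ↑t) *
          ((2 / ↑Real.pi) * ((-1) ^ k * Complex.exp (-↑t * ((k : ℂ) + 1) ^ 2)))
        = (2 / (Real.pi : ℂ) * (-1) ^ k) *
            (Complex.exp (-Complex.I * ↑ω * ↑t) * Complex.exp (-↑t * ((k : ℂ) + 1) ^ 2)) := by
          ring
      _ = _ := by
          rw [show Complex.exp (-Complex.I * ↑ω * ↑t) * Complex.exp (-↑t * ((k : ℂ) + 1) ^ 2)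
              = Complex.exp (-((((k : ℂ) + 1) ^ 2 + Complex.I * ω) * t)) by
            rw [← Complex.exp_add]; congr 1; ring]
  have hre : ∀ k : ℕ, 0 < ((((k : ℂ) + 1) ^ 2 + Complex.I * ω)).re := by
    intro k
    have : ((((k : ℂ) + 1) ^ 2 + Complex.I * ω)).re = ((k : ℝ) + 1) ^ 2 := by
      simp [Complex.add_re, Complex.mul_re, pow_two, Complex.add_im]
    rw [this]
    positivity
  have hint : ∀ k : ℕ, IntegrableOn (F k) (Set.Ioi 0) := by
    intro k
    rw [show F k = fun t : ℝ => (((2 / Real.pi : ℝ) : ℂ) * (-1 : ℂ) ^ k) *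
      Complex.exp (-((((k : ℂ) + 1) ^ 2 + Complex.I * ω) * (t : ℂ))) from funext (hFeq k)]
    exact (cexp_integrableOn_aux _ (hre k)).const_mul _
  have hnorm : ∀ k t, ‖F k t‖ = ‖(((2 / Real.pi : ℝ) : ℂ) * (-1 : ℂ) ^ k)‖ *
      Real.exp (-(((k : ℝ) + 1) ^ 2 * t)) := by
    intro k t
    rw [hFeq, norm_mul]
    congr 1
    rw [Complex.norm_exp]
    congr 1
    have : ((((k : ℂ) + 1) ^ 2 + Complex.I * ω) * t).re = ((k : ℝ) + 1) ^ 2 * t := by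
      simp [Complex.mul_re, Complex.add_re, Complex.add_im, Complex.mul_im, pow_two]
    rw [Complex.neg_re, this]
  have hsum : Summable fun k : ℕ => ∫ t in Set.Ioi (0 : ℝ), ‖F k t‖ := by
    have hval : ∀ k : ℕ, (∫ t in Set.Ioi (0 : ℝ), ‖F k t‖)
        = ‖(((2 / Real.pi : ℝ) : ℂ) * (-1 : ℂ) ^ k)‖ * (1 / ((k : ℝ) + 1) ^ 2) := by
      intro k
      simp_rw [hnorm]
      rw [integral_const_mul, real_exp_integral_aux _ (by positivity)]
    simp_rw [hval]
    apply Summable.of_nonneg_of_le (fun k => by positivity)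
      (fun k => ?_) (((summable_nat_add_iff 1).mpr
        (Real.summable_one_div_nat_pow.mpr one_lt_two)).mul_left (2 / Real.pi))
    have hπ : (0:ℝ) < Real.pi := Real.pi_pos
    rw [norm_mul]
    simp only [norm_pow, norm_neg, norm_one, one_pow, mul_one]
    rw [Complex.norm_real, Real.norm_of_nonneg (by positivity)]
    push_cast
    apply le_of_eq
    ring
  have swap := integral_tsum_of_summable_integral_norm
    (μ := volume.restrict (Set.Ioi (0:ℝ))) hint hsum
  calc ∫ t in Set.Ioi (0 : ℝ),
        Complex.exp (-Complex.I * ω * t) *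
          ((2 / Real.pi) * ∑' k : ℕ, (-1 : ℝ) ^ k * Real.exp (-t * ((k : ℝ) + 1) ^ 2) : ℝ)
      = ∫ t in Set.Ioi (0 : ℝ), ∑' k : ℕ, F k t := by
        apply setIntegral_congr_fun measurableSet_Ioi
        intro t _
        exact key t
    _ = ∑' k : ℕ, ∫ t in Set.Ioi (0 : ℝ), F k t := swap.symm
    _ = (2 / Real.pi) * ∑' k : ℕ, (-1 : ℂ) ^ k *
        (((k : ℂ) + 1) ^ 2 - Complex.I * ω) / (((k : ℂ) + 1) ^ 4 + (ω : ℂ) ^ 2) := by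
        rw [← tsum_mul_left]
        congr 1
        ext k
        have hkint : ∫ t in Set.Ioi (0 : ℝ), F k t
            = (((2 / Real.pi : ℝ) : ℂ) * (-1 : ℂ) ^ k) *
              (1 / ((((k : ℂ) + 1) ^ 2 + Complex.I * ω))) := by
          simp_rw [hFeq]
          rw [integral_const_mul, integral_cexp_neg_mul_aux _ (hre k)]
        rw [hkint]
        have hc0 : (((k : ℂ) + 1) ^ 2 + Complex.I * ω) ≠ 0 := by
          intro h
          have := hre k
          rw [h] at this
          simp at this
        have hd0 : (((k : ℂ) + 1) ^ 4 + (ω : ℂ) ^ 2) ≠ 0 := by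
          have : (((k : ℂ) + 1) ^ 4 + (ω : ℂ) ^ 2)
              = ((((k : ℝ) + 1) ^ 4 + ω ^ 2 : ℝ) : ℂ) := by push_cast; ring
          rw [this]
          intro h
          rw [Complex.ofReal_eq_zero] at h
          nlinarith [sq_nonneg ω, pow_pos (show (0:ℝ) < (k:ℝ) + 1 by positivity) 4]
        have h1 : (1 : ℂ) / ((((k : ℂ) + 1) ^ 2 + Complex.I * ω))
            = ((((k : ℂ) + 1) ^ 2 - Complex.I * ω)) / (((k : ℂ) + 1) ^ 4 + (ω : ℂ) ^ 2) := by
          rw [div_eq_div_iff hc0 hd0]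
          linear_combination (ω : ℂ) ^ 2 * Complex.I_sq
        rw [h1]
        push_cast
        ring
end

section
/- Fix α ∈ (0, 4/π) and define r_α(μ) := (α²/4 − μ²)·sinh(μπ)/α for μ ∈ ℝ. Then the only solution of μ = r_α(μ) with μ ∈ [0, α/2] is μ = 0. -/
open Real Set

private lemma sinh_le_mul_cosh {x : ℝ} (hx : 0 ≤ x) : Real.sinh x ≤ x * Real.cosh x := by
  have key : MonotoneOn (fun x : ℝ => x * Real.cosh x - Real.sinh x) (Set.Ici 0) := by
    apply monotoneOn_of_deriv_nonneg (convex_Ici 0)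
    · fun_prop
    · fun_prop
    · intro y hy
      have h : HasDerivAt (fun x : ℝ => x * Real.cosh x - Real.sinh x)
          (1 * Real.cosh y + y * Real.sinh y - Real.cosh y) y := by
        exact ((hasDerivAt_id y).mul (Real.hasDerivAt_cosh y)).sub (Real.hasDerivAt_sinh y)
      rw [h.deriv]
      have hy0 : 0 ≤ y := by simpa using interior_subset (s := Set.Ici (0:ℝ)) hy
      have := Real.sinh_nonneg_iff.mpr hy0
      nlinarith
  have := key (Set.self_mem_Ici) (by exact hx) hx
  simp at this
  linarith

private lemma sinh_poly_bound {x : ℝ} (hx : 0 ≤ x) : (4 - x ^ 2) * Real.sinh x ≤ 4 * x := by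
  -- g := derivative of f := 4x - (4-x^2) sinh x
  set g : ℝ → ℝ := fun x => 4 + 2 * x * Real.sinh x - (4 - x ^ 2) * Real.cosh x with hg
  have hgderiv : ∀ y : ℝ, HasDerivAt g ((y ^ 2 - 2) * Real.sinh y + 4 * y * Real.cosh y) y := by
    intro y
    have h1 : HasDerivAt (fun x : ℝ => 2 * x * Real.sinh x)
        (2 * Real.sinh y + 2 * y * Real.cosh y) y := by
      have := ((hasDerivAt_id y).const_mul 2).mul (Real.hasDerivAt_sinh y)
      exact this.congr_deriv (by simp [id])
    have h2 : HasDerivAt (fun x : ℝ => (4 - x ^ 2) * Real.cosh x)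
        ((-(2 * y)) * Real.cosh y + (4 - y ^ 2) * Real.sinh y) y := by
      have hp : HasDerivAt (fun x : ℝ => 4 - x ^ 2) (-(2 * y)) y := by
        have := ((hasDerivAt_pow 2 y).const_sub 4)
        exact this.congr_deriv (by simp)
      exact hp.mul (Real.hasDerivAt_cosh y)
    have := ((h1.const_add 4).sub h2)
    exact this.congr_deriv (by ring)
  have hg_mono : MonotoneOn g (Set.Ici 0) := by
    apply monotoneOn_of_deriv_nonneg (convex_Ici 0)
    · fun_prop
    · fun_prop
    · intro y hy
      have hy0 : 0 ≤ y := by simpa using interior_subset (s := Set.Ici (0:ℝ)) hy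
      rw [(hgderiv y).deriv]
      have h1 := sinh_le_mul_cosh hy0
      have h2 := Real.sinh_nonneg_iff.mpr hy0
      have h3 := (Real.cosh_pos (x := y)).le
      nlinarith [mul_nonneg hy0 h3, mul_nonneg (mul_nonneg hy0 hy0) h2]
  have hg0 : g 0 = 0 := by simp [hg]
  have hg_nonneg : ∀ y ∈ Set.Ici (0:ℝ), 0 ≤ g y := by
    intro y hy
    have := hg_mono (Set.self_mem_Ici) hy (by exact hy)
    rwa [hg0] at this
  have hf_mono : MonotoneOn (fun x : ℝ => 4 * x - (4 - x ^ 2) * Real.sinh x) (Set.Ici 0) := by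
    apply monotoneOn_of_deriv_nonneg (convex_Ici 0)
    · fun_prop
    · fun_prop
    · intro y hy
      have hy0 : 0 ≤ y := by simpa using interior_subset (s := Set.Ici (0:ℝ)) hy
      have hd : HasDerivAt (fun x : ℝ => 4 * x - (4 - x ^ 2) * Real.sinh x) (g y) y := by
        have hp : HasDerivAt (fun x : ℝ => 4 - x ^ 2) (-(2 * y)) y := by
          have := ((hasDerivAt_pow 2 y).const_sub 4)
          exact this.congr_deriv (by simp)
        have := ((hasDerivAt_id y).const_mul 4).sub (hp.mul (Real.hasDerivAt_sinh y))
        exact this.congr_deriv (by simp [hg]; ring)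
      rw [hd.deriv]
      exact hg_nonneg y (Set.mem_Ici.mpr hy0)
  have := hf_mono (Set.self_mem_Ici) (Set.mem_Ici.mpr hx) hx
  simp at this
  linarith

theorem char_eq_only_zero (α : ℝ) (hα0 : 0 < α) (hα : α < 4 / Real.pi)
    (μ : ℝ) (hμ : μ ∈ Set.Icc (0 : ℝ) (α / 2))
    (heq : μ = (α ^ 2 / 4 - μ ^ 2) * Real.sinh (μ * Real.pi) / α) :
    μ = 0 := by
  obtain ⟨hμ0, hμ2⟩ := hμ
  rcases eq_or_lt_of_le hμ0 with h0 | h0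
  · exact h0.symm
  exfalso
  have hπ := Real.pi_pos
  have hαπ : α * Real.pi < 4 := (lt_div_iff₀ hπ).mp hα
  rcases eq_or_lt_of_le hμ2 with h2 | h2
  · -- μ = α/2 : RHS is 0
    rw [h2] at heq
    have : (α ^ 2 / 4 - (α/2) ^ 2) = 0 := by ring
    rw [this] at heq
    simp at heq
    rw [heq] at h2
    nlinarith
  · have heq' : μ * α = (α ^ 2 / 4 - μ ^ 2) * Real.sinh (μ * Real.pi) := by
      field_simp at heq
      linarith
    have hx0 : 0 ≤ μ * Real.pi := by positivity
    have hs := sinh_poly_bound hx0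
    have hspos : 0 < Real.sinh (μ * Real.pi) := Real.sinh_pos_iff.mpr (by positivity)
    have hnum : 0 < α ^ 2 / 4 - μ ^ 2 := by nlinarith
    have hlt2 : μ * Real.pi < 2 := by nlinarith [mul_lt_mul_of_pos_right h2 hπ]
    have hden : 0 < 4 - (μ * Real.pi) ^ 2 := by
      nlinarith [mul_pos (by linarith : (0:ℝ) < 2 - μ * Real.pi) (by linarith : (0:ℝ) < 2 + μ * Real.pi)]
    nlinarith [mul_le_mul_of_nonneg_left hs hnum.le,
      mul_pos h0 (mul_pos (sub_pos.mpr hαπ) (by positivity : (0:ℝ) < α + μ ^ 2 * Real.pi))]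
end

section
/- Fix α ∈ (0, 4/π) and define r_α(μ) := (α²/4 − μ²)·sinh(μπ)/α. Then r_α is strictly concave on (0, α/2], i.e. r_α''(μ) < 0 for μ ∈ (0, α/2]. -/
open Real

lemma sinh_lt_mul_cosh {t : ℝ} (ht : 0 < t) : Real.sinh t < t * Real.cosh t := by
  have key : StrictMonoOn (fun x : ℝ => x * Real.cosh x - Real.sinh x) (Set.Icc 0 t) := by
    apply strictMonoOn_of_deriv_pos (convex_Icc 0 t)
    · fun_prop
    · intro x hx
      rw [interior_Icc] at hx
      have hd : HasDerivAt (fun x : ℝ => x * Real.cosh x - Real.sinh x)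
          (1 * Real.cosh x + x * Real.sinh x - Real.cosh x) x :=
        ((hasDerivAt_id x).mul (Real.hasDerivAt_cosh x)).sub (Real.hasDerivAt_sinh x)
      rw [hd.deriv]
      nlinarith [mul_pos hx.1 (Real.sinh_pos_iff.mpr hx.1)]
  have h := key (Set.left_mem_Icc.mpr ht.le) (Set.right_mem_Icc.mpr ht.le) ht
  simpa using h

lemma hasDeriv1 (α x : ℝ) :
    HasDerivAt (fun x : ℝ => (α ^ 2 / 4 - x ^ 2) * Real.sinh (x * Real.pi) / α)
      ((-(2 * x) * Real.sinh (x * Real.pi) +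
        (α ^ 2 / 4 - x ^ 2) * (Real.cosh (x * Real.pi) * Real.pi)) / α) x := by
  have h1 : HasDerivAt (fun x : ℝ => x * Real.pi) Real.pi x := by
    simpa using (hasDerivAt_id x).mul_const Real.pi
  have hs := h1.sinh
  have hp : HasDerivAt (fun x : ℝ => α ^ 2 / 4 - x ^ 2) (-(2 * x)) x := by
    simpa using (hasDerivAt_pow 2 x).const_sub (α ^ 2 / 4)
  exact (hp.mul hs).div_const α

lemma hasDeriv2 (α μ : ℝ) :
    HasDerivAt (fun x : ℝ => (-(2 * x) * Real.sinh (x * Real.pi) +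
        (α ^ 2 / 4 - x ^ 2) * (Real.cosh (x * Real.pi) * Real.pi)) / α)
      (((-2 * Real.sinh (μ * Real.pi) + -(2 * μ) * (Real.cosh (μ * Real.pi) * Real.pi)) +
        (-(2 * μ) * (Real.cosh (μ * Real.pi) * Real.pi) +
          (α ^ 2 / 4 - μ ^ 2) * (Real.sinh (μ * Real.pi) * Real.pi * Real.pi))) / α) μ := by
  have h1 : HasDerivAt (fun x : ℝ => x * Real.pi) Real.pi μ := by
    simpa using (hasDerivAt_id μ).mul_const Real.pi
  have hs := h1.sinh
  have hc := h1.cosh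
  have ha : HasDerivAt (fun x : ℝ => -(2 * x)) (-2) μ := by
    simpa [Pi.neg_def] using ((hasDerivAt_id μ).const_mul 2).neg
  have hp : HasDerivAt (fun x : ℝ => α ^ 2 / 4 - x ^ 2) (-(2 * μ)) μ := by
    simpa using (hasDerivAt_pow 2 μ).const_sub (α ^ 2 / 4)
  have hcp : HasDerivAt (fun x : ℝ => Real.cosh (x * Real.pi) * Real.pi)
      (Real.sinh (μ * Real.pi) * Real.pi * Real.pi) μ := hc.mul_const Real.pi
  exact ((ha.mul hs).add (hp.mul hcp)).div_const α

theorem r_alpha_strict_concave (α : ℝ) (hα0 : 0 < α) (hα : α < 4 / Real.pi)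
    (μ : ℝ) (hμ : μ ∈ Set.Ioc (0 : ℝ) (α / 2)) :
    deriv (deriv (fun x : ℝ => (α ^ 2 / 4 - x ^ 2) * Real.sinh (x * Real.pi) / α)) μ < 0 := by
  obtain ⟨hμ0, hμ2⟩ := hμ
  have hD1 : deriv (fun x : ℝ => (α ^ 2 / 4 - x ^ 2) * Real.sinh (x * Real.pi) / α)
      = fun x : ℝ => (-(2 * x) * Real.sinh (x * Real.pi) +
        (α ^ 2 / 4 - x ^ 2) * (Real.cosh (x * Real.pi) * Real.pi)) / α := by
    funext x; exact (hasDeriv1 α x).deriv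
  rw [hD1, (hasDeriv2 α μ).deriv]
  set s := Real.sinh (μ * Real.pi) with hs
  set c := Real.cosh (μ * Real.pi) with hc
  have hπ : (0 : ℝ) < Real.pi := Real.pi_pos
  have htpos : 0 < μ * Real.pi := mul_pos hμ0 hπ
  have h1 : s < (μ * Real.pi) * c := sinh_lt_mul_cosh htpos
  have h2 : 0 < s := Real.sinh_pos_iff.mpr htpos
  have h3 : (1 : ℝ) ≤ c := Real.one_le_cosh _
  have hαπ : α * Real.pi < 4 := by
    have := (lt_div_iff₀ hπ).mp hα
    linarith
  have h4 : Real.pi ^ 2 * (α ^ 2 / 4 - μ ^ 2) < 4 := by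
    nlinarith [sq_nonneg μ, sq_nonneg (α * Real.pi), mul_pos hα0 hπ]
  rw [div_neg_iff]
  right
  refine ⟨?_, hα0⟩
  nlinarith [mul_lt_mul_of_pos_left h4 h2, mul_pos htpos (lt_of_lt_of_le one_pos h3)]
end

section
/- For α > 4/π, the equation μ = (α²/4 − μ²)·sinh(μπ)/α has at least one solution μ in the open interval (0, α/2). -/
theorem char_eq_has_solution (α : ℝ) (hα : 4 / Real.pi < α) :
    ∃ μ ∈ Set.Ioo (0 : ℝ) (α / 2),
      μ = (α ^ 2 / 4 - μ ^ 2) * Real.sinh (μ * Real.pi) / α := by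
  have hπ : (0:ℝ) < Real.pi := Real.pi_pos
  have hα0 : 0 < α := lt_trans (by positivity) hα
  have hαπ : 4 < Real.pi * α := by
    rw [div_lt_iff₀ hπ] at hα; linarith
  set A : ℝ := α ^ 2 / 4 - α / Real.pi with hA
  have hA0 : 0 < A := by
    rw [hA]
    have : α / Real.pi < α ^ 2 / 4 := by
      rw [div_lt_div_iff₀ hπ (by norm_num)]
      nlinarith
    linarith
  set μ₀ : ℝ := Real.sqrt A / 2 with hμ₀
  have hsA : 0 < Real.sqrt A := Real.sqrt_pos.mpr hA0
  have hμ₀0 : 0 < μ₀ := by positivity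
  have hμ₀sq : μ₀ ^ 2 = A / 4 := by
    rw [hμ₀, div_pow, Real.sq_sqrt hA0.le]; norm_num
  have hμ₀lt : μ₀ < α / 2 := by
    have : Real.sqrt A < α := by
      have := Real.sqrt_lt_sqrt hA0.le (show A < α ^ 2 by rw [hA]; nlinarith [div_pos hα0 hπ])
      rwa [Real.sqrt_sq hα0.le] at this
    rw [hμ₀]; linarith
  set f : ℝ → ℝ := fun μ => μ - (α ^ 2 / 4 - μ ^ 2) * Real.sinh (μ * Real.pi) / α with hf
  have hcont : Continuous f := by
    apply Continuous.sub continuous_id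
    apply Continuous.div_const
    exact ((continuous_const.sub (continuous_pow 2)).mul
      (Real.continuous_sinh.comp (continuous_id.mul continuous_const)))
  have hfneg : f μ₀ < 0 := by
    have hsinh : μ₀ * Real.pi ≤ Real.sinh (μ₀ * Real.pi) :=
      Real.self_le_sinh_iff.mpr (by positivity)
    have hcoef : α / Real.pi < α ^ 2 / 4 - μ₀ ^ 2 := by
      rw [hμ₀sq, hA]
      have hdiv : α / Real.pi * Real.pi = α := div_mul_cancel₀ _ hπ.ne'
      rw [div_lt_iff₀ hπ] at hα ⊢
      nlinarith [hdiv, mul_pos hα0 hπ]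
    have h1 : μ₀ * α < (α ^ 2 / 4 - μ₀ ^ 2) * (μ₀ * Real.pi) := by
      have := mul_lt_mul_of_pos_right hcoef (show 0 < μ₀ * Real.pi by positivity)
      calc μ₀ * α = α / Real.pi * (μ₀ * Real.pi) := by field_simp
        _ < _ := this
    have h2 : (α ^ 2 / 4 - μ₀ ^ 2) * (μ₀ * Real.pi)
        ≤ (α ^ 2 / 4 - μ₀ ^ 2) * Real.sinh (μ₀ * Real.pi) := by
      apply mul_le_mul_of_nonneg_left hsinh
      have := hcoef
      have : 0 < α / Real.pi := by positivity
      linarith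
    have h3 : μ₀ * α < (α ^ 2 / 4 - μ₀ ^ 2) * Real.sinh (μ₀ * Real.pi) := lt_of_lt_of_le h1 h2
    have : μ₀ < (α ^ 2 / 4 - μ₀ ^ 2) * Real.sinh (μ₀ * Real.pi) / α := by
      rw [lt_div_iff₀ hα0]; exact h3
    simp only [hf]; linarith
  have hfpos : 0 < f (α / 2) := by
    have : (α ^ 2 / 4 - (α / 2) ^ 2) = 0 := by ring
    simp only [hf, this, zero_mul, zero_div, sub_zero]
    positivity
  have hsub : Set.Ioo (f μ₀) (f (α / 2)) ⊆ f '' Set.Ioo μ₀ (α / 2) :=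
    intermediate_value_Ioo hμ₀lt.le hcont.continuousOn
  obtain ⟨μ, hμmem, hμeq⟩ := hsub ⟨hfneg, hfpos⟩
  refine ⟨μ, ⟨lt_trans hμ₀0 hμmem.1, hμmem.2⟩, ?_⟩
  have : μ - (α ^ 2 / 4 - μ ^ 2) * Real.sinh (μ * Real.pi) / α = 0 := hμeq
  linarith
end

section
/- Let y : [0, ∞) → ℝ be continuous and bounded, suppose H : ℝ → ℝ is continuous with H(ξ) > 0 for all ξ ≠ 0, suppose H ∘ y is uniformly continuous on [0, ∞), and suppose sup_{t≥0} ∫_0^t H(y(τ)) dτ < ∞. Then y(t) → 0 as t → ∞. -/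
theorem decay_from_integral_bound (y : ℝ → ℝ) (H : ℝ → ℝ)
    (hy_cont : ContinuousOn y (Set.Ici 0)) (hy_bdd : ∃ M, ∀ t ≥ (0 : ℝ), |y t| ≤ M)
    (hH_cont : Continuous H) (hH_pos : ∀ ξ : ℝ, ξ ≠ 0 → 0 < H ξ)
    (hHy_uc : UniformContinuousOn (fun t => H (y t)) (Set.Ici 0))
    (hbound : ∃ C : ℝ, ∀ t ≥ (0 : ℝ), ∫ τ in (0 : ℝ)..t, H (y τ) ≤ C) :
    Filter.Tendsto y Filter.atTop (nhds 0) := by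
  obtain ⟨M, hM⟩ := hy_bdd
  obtain ⟨C, hC⟩ := hbound
  set f : ℝ → ℝ := fun t => H (y t) with hfdef
  -- H is nonnegative everywhere
  have hH0 : 0 ≤ H 0 := by
    have h1 : Filter.Tendsto H (nhdsWithin 0 {(0:ℝ)}ᶜ) (nhds (H 0)) :=
      (hH_cont.tendsto 0).mono_left nhdsWithin_le_nhds
    have h2 : ∀ᶠ x in nhdsWithin 0 {(0:ℝ)}ᶜ, 0 ≤ H x := by
      filter_upwards [self_mem_nhdsWithin] with x hx
      exact (hH_pos x hx).le
    exact ge_of_tendsto h1 h2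
  have hHnn : ∀ ξ : ℝ, 0 ≤ H ξ := by
    intro ξ
    rcases eq_or_ne ξ 0 with h | h
    · simpa [h] using hH0
    · exact (hH_pos ξ h).le
  have hfnn : ∀ t : ℝ, 0 ≤ f t := fun t => hHnn (y t)
  have hfc : ContinuousOn f (Set.Ici 0) := hH_cont.comp_continuousOn hy_cont
  have hint : ∀ a b : ℝ, 0 ≤ a → a ≤ b →
      IntervalIntegrable f MeasureTheory.volume a b := by
    intro a b ha hab
    apply (hfc.mono ?_).intervalIntegrable
    rw [Set.uIcc_of_le hab]
    intro x hx
    exact le_trans ha hx.1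
  -- Barbalat: f t < c for all large t, for any c > 0
  have key : ∀ c : ℝ, 0 < c → ∃ N : ℝ, ∀ t ≥ N, f t < c := by
    intro c hc
    by_contra hcon
    push_neg at hcon
    obtain ⟨δ, hδ, hδ'⟩ := (Metric.uniformContinuousOn_iff.mp hHy_uc) (c/2) (by positivity)
    set d : ℝ := δ/2 with hddef
    have hd : 0 < d := by positivity
    -- choose points where f ≥ c
    have hcon' : ∀ N : ℝ, ∃ t, max N 0 ≤ t ∧ c ≤ f t := by
      intro N
      obtain ⟨t, ht1, ht2⟩ := hcon (max N 0)
      exact ⟨t, ht1, ht2⟩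
    choose g hg1 hg2 using hcon'
    set t : ℕ → ℝ := fun n => Nat.rec (g 0) (fun _ p => g (p + d)) n with htdef
    have ht0 : t 0 = g 0 := rfl
    have htsucc : ∀ n, t (n+1) = g (t n + d) := fun n => rfl
    have htnn : ∀ n, 0 ≤ t n := by
      intro n
      cases n with
      | zero => exact le_trans (le_max_right 0 0) (hg1 0)
      | succ m => exact le_trans (le_max_right _ 0) (hg1 (t m + d))
    have hstep : ∀ n, t n + d ≤ t (n+1) := by
      intro n
      rw [htsucc n]
      exact le_trans (le_max_left _ 0) (hg1 (t n + d))
    have hftn : ∀ n, c ≤ f (t n) := by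
      intro n
      cases n with
      | zero => exact hg2 0
      | succ m => exact hg2 (t m + d)
    -- on [t n, t n + d], f ≥ c/2
    have hlow : ∀ n, ∀ s ∈ Set.Icc (t n) (t n + d), c/2 ≤ f s := by
      intro n s hs
      have hs0 : (0:ℝ) ≤ s := le_trans (htnn n) hs.1
      have hdist : dist s (t n) < δ := by
        rw [Real.dist_eq, abs_of_nonneg (by linarith [hs.1])]
        have := hs.2
        simp only [hddef] at *
        linarith
      have := hδ' s hs0 (t n) (htnn n) hdist
      rw [Real.dist_eq] at this
      have h2 := abs_lt.mp this
      have := hftn n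
      simp only [hfdef] at *
      linarith [h2.1]
    have hseg : ∀ n, c/2 * d ≤ ∫ τ in (t n)..(t n + d), f τ := by
      intro n
      have h1 : IntervalIntegrable (fun _ : ℝ => c/2) MeasureTheory.volume (t n) (t n + d) :=
        intervalIntegrable_const
      have h2 : IntervalIntegrable f MeasureTheory.volume (t n) (t n + d) :=
        hint _ _ (htnn n) (by linarith)
      have := intervalIntegral.integral_mono_on (by linarith : t n ≤ t n + d) h1 h2 (hlow n)
      rw [intervalIntegral.integral_const, smul_eq_mul] at this
      have he : (t n + d - t n) * (c/2) = c/2 * d := by ring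
      linarith [he ▸ this]
    have hmain : ∀ n : ℕ, (n+1 : ℝ) * (c/2 * d) ≤ ∫ τ in (0:ℝ)..(t n + d), f τ := by
      intro n
      induction n with
      | zero =>
        have hsplit := intervalIntegral.integral_add_adjacent_intervals
          (hint 0 (t 0) le_rfl (htnn 0)) (hint (t 0) (t 0 + d) (htnn 0) (by linarith))
        have hnn : 0 ≤ ∫ τ in (0:ℝ)..(t 0), f τ :=
          intervalIntegral.integral_nonneg (htnn 0) (fun u _ => hfnn u)
        have := hseg 0
        rw [← hsplit]
        push_cast
        linarith
      | succ m ih =>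
        have h1 : t m + d ≤ t (m+1) := hstep m
        have h2 : (0:ℝ) ≤ t m + d := by linarith [htnn m]
        have hsplit1 := intervalIntegral.integral_add_adjacent_intervals
          (hint 0 (t m + d) le_rfl h2) (hint (t m + d) (t (m+1)) h2 h1)
        have hsplit2 := intervalIntegral.integral_add_adjacent_intervals
          ((hint 0 (t m + d) le_rfl h2).trans (hint (t m + d) (t (m+1)) h2 h1))
          (hint (t (m+1)) (t (m+1) + d) (htnn (m+1)) (by linarith))
        have hnn1 : 0 ≤ ∫ τ in (t m + d)..(t (m+1)), f τ :=
          intervalIntegral.integral_nonneg h1 (fun u _ => hfnn u)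
        have := hseg (m+1)
        rw [← hsplit2, ← hsplit1]
        push_cast
        push_cast at ih
        linarith
    obtain ⟨n, hn⟩ := exists_nat_gt (C / (c/2 * d))
    have hcd : 0 < c/2 * d := by positivity
    have hCn : C < (n+1 : ℝ) * (c/2 * d) := by
      have : C / (c/2*d) < (n+1:ℝ) := by linarith
      calc C = C / (c/2*d) * (c/2*d) := by field_simp
        _ < (n+1:ℝ) * (c/2*d) := by exact mul_lt_mul_of_pos_right this hcd
    have := hC (t n + d) (by linarith [htnn n])
    linarith [hmain n]
  -- Conclude y → 0
  rw [Metric.tendsto_atTop]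
  intro ε hε
  set K : Set ℝ := Set.Icc (-M) M ∩ {ξ : ℝ | ε ≤ |ξ|} with hKdef
  have hKcomp : IsCompact K :=
    isCompact_Icc.inter_right (isClosed_le continuous_const continuous_abs)
  rcases K.eq_empty_or_nonempty with hKe | hKne
  · refine ⟨0, fun t ht => ?_⟩
    rw [Real.dist_eq, sub_zero]
    by_contra habs
    push_neg at habs
    have : y t ∈ K := ⟨abs_le.mp (hM t ht), habs⟩
    rw [hKe] at this
    exact this
  · obtain ⟨ξ₀, hξ₀K, hξ₀min⟩ := hKcomp.exists_isMinOn hKne hH_cont.continuousOn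
    have hξ₀ne : ξ₀ ≠ 0 := by
      intro h
      have := hξ₀K.2
      rw [h] at this
      simp at this
      linarith
    obtain ⟨N, hN⟩ := key (H ξ₀) (hH_pos ξ₀ hξ₀ne)
    refine ⟨max N 0, fun s hs => ?_⟩
    rw [Real.dist_eq, sub_zero]
    by_contra habs
    push_neg at habs
    have hs0 : (0:ℝ) ≤ s := le_trans (le_max_right N 0) hs
    have hmem : y s ∈ K := ⟨abs_le.mp (hM s hs0), habs⟩
    have h1 : H ξ₀ ≤ H (y s) := hξ₀min hmem
    have h2 : f s < H ξ₀ := hN s (le_trans (le_max_left N 0) hs)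
    simp only [hfdef] at h2
    linarith
end

section
/- For ω > 0 with ω real, the condition Im(1/(√(iω)·sinh(π√(iω)))) = 0 is equivalent to sinh(π√(ω/2))·cos(π√(ω/2)) + cosh(π√(ω/2))·sin(π√(ω/2)) = 0, i.e. to tan(π√(ω/2)) = −tanh(π√(ω/2)). -/
open Complex

private lemma sqrt_half' (ω : ℝ) (hω : 0 < ω) :
    Real.sqrt (ω / 2) = Real.sqrt ω * (Real.sqrt 2 / 2) := by
  have h2 : Real.sqrt 2 * Real.sqrt 2 = 2 := Real.mul_self_sqrt (by norm_num)
  have h2' : Real.sqrt 2 ≠ 0 := by positivity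
  rw [Real.sqrt_div hω.le]
  field_simp
  nlinarith [Real.sqrt_nonneg ω, Real.sqrt_nonneg 2]

private lemma root_eq (ω : ℝ) (hω : 0 < ω) :
    (Complex.I * ω) ^ (1 / 2 : ℂ) = (Real.sqrt (ω / 2) : ℂ) * (1 + Complex.I) := by
  have hne : (Complex.I * ω : ℂ) ≠ 0 := by
    simp [Complex.ext_iff, hω.ne']
  have habs : ‖Complex.I * ω‖ = ω := by
    rw [norm_mul, Complex.norm_I, Complex.norm_real, one_mul, Real.norm_of_nonneg hω.le]
  have harg : Complex.arg (Complex.I * ω) = Real.pi / 2 := by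
    rw [mul_comm, Complex.arg_real_mul _ hω, Complex.arg_I]
  rw [Complex.cpow_def_of_ne_zero hne, Complex.log, habs, harg]
  have hexp : ((Real.log ω : ℂ) + (Real.pi / 2 : ℝ) * Complex.I) * (1 / 2 : ℂ)
      = ((Real.log ω / 2 : ℝ) : ℂ) + ((Real.pi / 4 : ℝ) : ℂ) * Complex.I := by
    push_cast
    ring
  rw [hexp, Complex.exp_add, Complex.exp_mul_I, ← Complex.ofReal_exp,
    ← Complex.ofReal_cos, ← Complex.ofReal_sin]
  have he : Real.exp (Real.log ω / 2) = Real.sqrt ω := by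
    rw [Real.sqrt_eq_rpow, Real.rpow_def_of_pos hω]
    ring_nf
  rw [he, Real.cos_pi_div_four, Real.sin_pi_div_four, sqrt_half' ω hω]
  push_cast
  ring

private lemma sinh_root (s : ℝ) :
    Complex.sinh ((Real.pi : ℂ) * ((s : ℂ) * (1 + Complex.I))) =
      ((Real.sinh (Real.pi * s) * Real.cos (Real.pi * s) : ℝ) : ℂ) +
      ((Real.cosh (Real.pi * s) * Real.sin (Real.pi * s) : ℝ) : ℂ) * Complex.I := by
  have h : (Real.pi : ℂ) * ((s : ℂ) * (1 + Complex.I)) =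
      ((Real.pi * s : ℝ) : ℂ) + ((Real.pi * s : ℝ) : ℂ) * Complex.I := by
    push_cast; ring
  rw [h, Complex.sinh_add, Complex.sinh_mul_I, Complex.cosh_mul_I]
  push_cast
  ring

theorem nyquist_real_crossing (ω : ℝ) (hω : 0 < ω) :
    ((1 / (((Complex.I * ω) ^ (1 / 2 : ℂ)) *
        Complex.sinh (Real.pi * (Complex.I * ω) ^ (1 / 2 : ℂ)))).im = 0 ↔
      Real.sinh (Real.pi * Real.sqrt (ω / 2)) * Real.cos (Real.pi * Real.sqrt (ω / 2)) +
        Real.cosh (Real.pi * Real.sqrt (ω / 2)) * Real.sin (Real.pi * Real.sqrt (ω / 2)) = 0) ∧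
    (Real.sinh (Real.pi * Real.sqrt (ω / 2)) * Real.cos (Real.pi * Real.sqrt (ω / 2)) +
        Real.cosh (Real.pi * Real.sqrt (ω / 2)) * Real.sin (Real.pi * Real.sqrt (ω / 2)) = 0 ↔
      Real.tan (Real.pi * Real.sqrt (ω / 2)) = -Real.tanh (Real.pi * Real.sqrt (ω / 2))) := by
  set s : ℝ := Real.sqrt (ω / 2) with hs
  have hspos : 0 < s := Real.sqrt_pos.2 (by linarith)
  have hπs : 0 < Real.pi * s := mul_pos Real.pi_pos hspos
  set A : ℝ := Real.sinh (Real.pi * s) * Real.cos (Real.pi * s) with hA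
  set B : ℝ := Real.cosh (Real.pi * s) * Real.sin (Real.pi * s) with hB
  have hcosh : 0 < Real.cosh (Real.pi * s) := Real.cosh_pos _
  have hsinh : 0 < Real.sinh (Real.pi * s) := Real.sinh_pos_iff.2 hπs
  have hAB : A ^ 2 + B ^ 2 > 0 := by
    by_contra h
    push_neg at h
    have hA0 : A = 0 := by nlinarith
    have hB0 : B = 0 := by nlinarith
    have hsin : Real.sin (Real.pi * s) = 0 := by
      rcases mul_eq_zero.1 hB0 with h' | h'
      · linarith
      · exact h'
    have hcos : Real.cos (Real.pi * s) ≠ 0 := by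
      have hpy := Real.sin_sq_add_cos_sq (Real.pi * s)
      intro hc; rw [hsin, hc] at hpy; norm_num at hpy
    rcases mul_eq_zero.1 hA0 with h' | h'
    · linarith
    · exact hcos h'
  constructor
  · rw [root_eq ω hω, ← hs, sinh_root s, ← hA, ← hB]
    have hD : ((s : ℂ) * (1 + Complex.I)) * ((A : ℂ) + (B : ℂ) * Complex.I) =
        ((s * (A - B) : ℝ) : ℂ) + ((s * (A + B) : ℝ) : ℂ) * Complex.I := by
      push_cast
      linear_combination ((s : ℂ) * ((Real.cosh (Real.pi * s) * Real.sin (Real.pi * s) : ℝ) : ℂ)) * Complex.I_sq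
    rw [hD]
    have him : ((1 : ℂ) / (((s * (A - B) : ℝ) : ℂ) + ((s * (A + B) : ℝ) : ℂ) * Complex.I)).im
        = -(s * (A + B)) / ((s * (A - B)) ^ 2 + (s * (A + B)) ^ 2) := by
      rw [one_div, Complex.inv_im]
      simp [Complex.normSq_apply]
      ring_nf
    rw [him]
    have hDpos : 0 < (s * (A - B)) ^ 2 + (s * (A + B)) ^ 2 := by
      nlinarith [mul_pos (mul_pos hspos hspos) hAB]
    rw [div_eq_zero_iff]
    constructor
    · rintro (h | h)
      · have : s * (A + B) = 0 := by linarith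
        rcases mul_eq_zero.1 this with h' | h'
        · exact absurd h' hspos.ne'
        · exact h'
      · exact absurd h hDpos.ne'
    · intro h
      left
      rw [h, mul_zero, neg_zero]
  · by_cases hc : Real.cos (Real.pi * s) = 0
    · have hsin : Real.sin (Real.pi * s) ≠ 0 := by
        have hpy := Real.sin_sq_add_cos_sq (Real.pi * s)
        intro hsn; rw [hsn, hc] at hpy; norm_num at hpy
      have htanh : 0 < Real.tanh (Real.pi * s) := by
        rw [Real.tanh_eq_sinh_div_cosh]
        positivity
      constructor
      · intro h
        exfalso
        have hA0 : A = 0 := by rw [hA, hc, mul_zero]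
        have hB0 : B = 0 := by linarith
        rcases mul_eq_zero.1 hB0 with h' | h'
        · linarith
        · exact hsin h'
      · intro h
        exfalso
        rw [Real.tan_eq_sin_div_cos, hc, div_zero] at h
        linarith
    · rw [Real.tan_eq_sin_div_cos, Real.tanh_eq_sinh_div_cosh, hA, hB]
      constructor
      · intro h
        rw [div_eq_iff hc]
        field_simp
        linarith
      · intro h
        rw [div_eq_iff hc] at h
        field_simp at h
        linarith
end
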